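/- Let F ∈ F_q[x] have degree d ≥ 1. Suppose there exist θ ∈ F_q* and a monic polynomial T over the algebraic closure of F_q such that T(F(x)) = θ(x^q - x)F'(x) as polynomials. Then T(x) = ∏_{γ ∈ V_F}(x - γ), and F is a minimal value set polynomial, i.e., |V_F| = ⌊(q-1)/d⌋ + 1. -/

import Mathlib

open Polynomial

theorem stmt_1 {Fq : Type*} [Field Fq] [Fintype Fq] [DecidableEq Fq]
    (q : ℕ) (hq : Fintype.card Fq = q)
    (F : Polynomial Fq) (d : ℕ) (hdeg : F.natDegree = d) (hd : 1 ≤ d)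
    (θ : Fq) (hθ : θ ≠ 0)
    (T : Polynomial (AlgebraicClosure Fq)) (hT : T.Monic)
    (heq : T.comp (F.map (algebraMap Fq (AlgebraicClosure Fq))) =
      Polynomial.C (algebraMap Fq (AlgebraicClosure Fq) θ) *
        (Polynomial.X ^ q - Polynomial.X) *
        Polynomial.derivative (F.map (algebraMap Fq (AlgebraicClosure Fq)))) :
    T = ∏ γ ∈ Finset.image (fun a => F.eval a) Finset.univ,
          (Polynomial.X - Polynomial.C (algebraMap Fq (AlgebraicClosure Fq) γ)) ∧
    (Finset.image (fun a => F.eval a) Finset.univ).card = (q - 1) / d + 1 := by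
  classical
  set K := AlgebraicClosure Fq
  set φ := algebraMap Fq K with hφ
  have φinj : Function.Injective φ := (algebraMap Fq K).injective
  set Fb : K[X] := F.map φ with hFbdef
  have hq2 : 2 ≤ q := by
    rw [← hq]; exact Fintype.one_lt_card
  have hFbdeg : Fb.natDegree = d := by
    rw [hFbdef, natDegree_map, hdeg]
  have hFb0 : Fb ≠ 0 := fun h => by simp [h] at hFbdeg; omega
  have hT0 : T ≠ 0 := hT.ne_zero
  -- derivative nonzero
  have hcomp0 : T.comp Fb ≠ 0 := by
    intro h
    have hlc := leadingCoeff_comp (p := T) (q := Fb) (by omega)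
    rw [h] at hlc
    simp [hT.leadingCoeff, leadingCoeff_eq_zero.not.mpr hFb0] at hlc
    exact (pow_ne_zero _ (leadingCoeff_ne_zero.mpr hFb0)) hlc.symm
  have hD0 : derivative Fb ≠ 0 := by
    intro h
    rw [h, mul_zero] at heq
    exact hcomp0 heq
  set m := (derivative Fb).natDegree with hm
  have hmd : m ≤ d - 1 := hFbdeg ▸ natDegree_derivative_le Fb
  -- degree of X^q - X
  have hG : (X ^ q - X : K[X]).natDegree = q := by
    rw [natDegree_sub_eq_left_of_natDegree_lt] <;>
      simp only [natDegree_X_pow, natDegree_X] <;> omega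
  have hG0 : (X ^ q - X : K[X]) ≠ 0 := fun h => by simp [h] at hG; omega
  have hθ' : (C (φ θ) : K[X]) ≠ 0 := by
    simp only [ne_eq, C_eq_zero]
    exact fun h => hθ (φinj (by simpa using h))
  -- degree equation
  set e := T.natDegree with he
  have hdegeq : e * d = q + m := by
    have := congrArg natDegree heq
    rwa [natDegree_comp, hFbdeg, natDegree_mul (mul_ne_zero hθ' hG0) hD0,
      natDegree_mul hθ' hG0, natDegree_C, zero_add, hG] at this
  -- each value is a root of T
  have hroot : ∀ a : Fq, T.eval (φ (F.eval a)) = 0 := by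
    intro a
    have := congrArg (Polynomial.eval (φ a)) heq
    rw [eval_comp] at this
    have hFba : Fb.eval (φ a) = φ (F.eval a) := by
      rw [hFbdef, eval_map, eval₂_hom]
    have haq : (φ a) ^ q - φ a = 0 := by
      rw [← map_pow, ← hq, FiniteField.pow_card, sub_self]
    rw [hFba] at this
    rw [this]
    simp [haq]
  set VF : Finset Fq := Finset.image (fun a => F.eval a) Finset.univ with hVF
  set S : Finset K := VF.image φ with hS
  have hcardS : S.card = VF.card := Finset.card_image_of_injective _ φinj
  -- S.val ≤ T.roots
  have hSle : S.val ≤ T.roots := by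
    rw [Multiset.le_iff_count]
    intro s
    by_cases hs : s ∈ S
    · have h1 : S.val.count s = 1 := Multiset.count_eq_one_of_mem S.nodup hs
      obtain ⟨γ, hγ, rfl⟩ := Finset.mem_image.mp hs
      obtain ⟨a, -, rfl⟩ := Finset.mem_image.mp hγ
      have : φ (F.eval a) ∈ T.roots := by
        rw [mem_roots hT0]
        exact hroot a
      rw [h1]
      exact Multiset.one_le_count_iff_mem.mpr this
    · rw [Multiset.count_eq_zero_of_notMem (by simpa using hs)]
      exact Nat.zero_le _
  have hsplits : T.Splits := IsAlgClosed.splits T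
  have hcardroots : (T.roots).card = e := splits_iff_card_roots.mp hsplits
  have hSe : S.card ≤ e := by
    have := Multiset.card_le_card hSle
    rwa [hcardroots] at this
  -- lower bound: q ≤ VF.card * d
  have hlow : q ≤ VF.card * d := by
    have hcount := Finset.card_eq_sum_card_image (fun a => F.eval a) (Finset.univ : Finset Fq)
    have hfib : ∀ c ∈ VF, (Finset.univ.filter fun a => F.eval a = c).card ≤ d := by
      intro c _
      have hP0 : F - C c ≠ 0 := fun h => by
        have : (F - C c).natDegree = d := by rw [natDegree_sub_C, hdeg]
        rw [h] at this; simp at this; omega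
      have hsub : (Finset.univ.filter fun a => F.eval a = c) ⊆ (F - C c).roots.toFinset := by
        intro a ha
        simp only [Finset.mem_filter] at ha
        rw [Multiset.mem_toFinset, mem_roots hP0]
        simp [IsRoot, ha.2]
      calc (Finset.univ.filter fun a => F.eval a = c).card
          ≤ (F - C c).roots.toFinset.card := Finset.card_le_card hsub
        _ ≤ Multiset.card (F - C c).roots := Multiset.toFinset_card_le _
        _ ≤ (F - C c).natDegree := card_roots' _
        _ = d := by rw [natDegree_sub_C, hdeg]
    calc q = (Finset.univ : Finset Fq).card := by rw [Finset.card_univ, hq]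
      _ = ∑ c ∈ VF, (Finset.univ.filter fun a => F.eval a = c).card := hcount
      _ ≤ ∑ _c ∈ VF, d := Finset.sum_le_sum hfib
      _ = VF.card * d := by rw [Finset.sum_const, smul_eq_mul]
  -- e ≤ VF.card
  have heVF : e ≤ VF.card := by
    by_contra h
    push_neg at h
    have : e * d < (VF.card + 1) * d := by
      calc e * d = q + m := hdegeq
        _ < q + d := by omega
        _ ≤ VF.card * d + d := by omega
        _ = (VF.card + 1) * d := by ring
    have := Nat.lt_of_mul_lt_mul_right this
    omega
  have hVFe : VF.card = e := by omega
  have hScard : S.card = e := by omega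
  -- roots equal S.val
  have hrootsS : T.roots = S.val := by
    refine (Multiset.eq_of_le_of_card_le hSle ?_).symm
    rw [hcardroots]
    simpa using hScard.ge
  constructor
  · have hTfact := hsplits.eq_prod_roots_of_monic hT
    rw [hrootsS] at hTfact
    calc T = (Multiset.map (fun a => X - C a) S.val).prod := hTfact
      _ = ∏ s ∈ S, (X - C s) := (Finset.prod_eq_multiset_prod _ _).symm
      _ = ∏ γ ∈ VF, (X - C (φ γ)) := Finset.prod_image (fun a _ b _ h => φinj h)
  · rw [hVFe]
    have he1 : 1 ≤ e := by
      rcases Nat.eq_zero_or_pos e with h | h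
      · rw [h, zero_mul] at hdegeq; omega
      · exact h
    have h1 : (e - 1) * d = e * d - d := Nat.sub_one_mul e d
    have key : (q - 1) / d = e - 1 := by
      apply Nat.div_eq_of_lt_le
      · omega
      · rw [Nat.sub_add_cancel he1]; omega
    omega
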